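/- arXiv:1102.0092 — 3 statements merged into one kernel-verified Lean document; each statement's English description precedes it below -/
import Mathlib

section
/- Let C_1, C_2, α, β > 0 and let k : [0,∞) → ℝ solve the ODE k'(t) = C_1 k(1 - k^α) + C_2 k^{d+1} e^{-βt} with d ≥ 1. Then there exists δ > 0 (depending on C_1, C_2, α, β, d) such that whenever 0 < k(0) < δ, the solution k exists globally, and there exist constants C > 0 and ε = min{β, C_1 α/2} with |k(t) - 1| ≤ C e^{-ε t} for all t ≥ 0; in particular k(t) → 1 exponentially as t → ∞. -/
open Real Filter
open scoped Topology

lemma barrier_Icc {a b : ℝ} {f f' B B' : ℝ → ℝ}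
    (hf : ∀ t, a ≤ t → HasDerivAt f (f' t) t)
    (hB : ∀ t, a ≤ t → HasDerivAt B (B' t) t)
    (h0 : f a ≤ B a)
    (hlt : ∀ t, t ∈ Set.Ico a b → f t = B t → f' t < B' t) :
    ∀ t ∈ Set.Icc a b, f t ≤ B t := by
  intro t ht
  refine image_le_of_deriv_right_lt_deriv_boundary'
    (fun x hx => ((hf x hx.1).continuousAt).continuousWithinAt)
    (fun x hx => (hf x hx.1).hasDerivWithinAt) h0
    (fun x hx => ((hB x hx.1).continuousAt).continuousWithinAt)
    (fun x hx => (hB x hx.1).hasDerivWithinAt)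
    (fun x hx h => hlt x hx h) ht

lemma barrier_Ici {a : ℝ} {f f' B B' : ℝ → ℝ}
    (hf : ∀ t, a ≤ t → HasDerivAt f (f' t) t)
    (hB : ∀ t, a ≤ t → HasDerivAt B (B' t) t)
    (h0 : f a ≤ B a)
    (hlt : ∀ t, a ≤ t → f t = B t → f' t < B' t) :
    ∀ t, a ≤ t → f t ≤ B t := fun b hb =>
  barrier_Icc hf hB h0 (fun t ht => hlt t ht.1) b ⟨hb, le_rfl⟩

set_option maxHeartbeats 2000000 in
/-- ODE lemma — for small initial data the solution of
`k' = C₁ k (1-k^α) + C₂ k^{d+1} e^{-βt}` converges exponentially to 1. -/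
theorem stmt_7 (d : ℕ) (hd : 1 ≤ d) (C₁ C₂ α β : ℝ)
    (hC₁ : 0 < C₁) (hC₂ : 0 < C₂) (hα : 0 < α) (hβ : 0 < β) :
    ∃ δ > (0 : ℝ), ∀ k : ℝ → ℝ,
      (∀ t ≥ (0 : ℝ), HasDerivAt k
        (C₁ * k t * (1 - k t ^ α) + C₂ * k t ^ (d + 1) * Real.exp (-β * t)) t) →
      0 < k 0 → k 0 < δ →
      ∃ C > (0 : ℝ), ∀ t ≥ (0 : ℝ),
        |k t - 1| ≤ C * Real.exp (-(min β (C₁ * α / 2)) * t) := by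
  -- basic constants
  have h2α : 1 < (2:ℝ) ^ α := by
    rw [Real.one_lt_rpow_iff_of_pos (by norm_num)]
    exact Or.inl ⟨by norm_num, hα⟩
  -- the time T after which the forcing term is dominated at level k = 2
  obtain ⟨T, hT0, hT⟩ : ∃ T ≥ (0:ℝ),
      C₂ * 2 ^ (d + 1) * Real.exp (-β * T) < 2 * C₁ * ((2:ℝ) ^ α - 1) := by
    have h1 : Filter.Tendsto (fun t : ℝ => C₂ * 2 ^ (d + 1) * Real.exp (-β * t))
        Filter.atTop (𝓝 0) := by
      have h2 : Filter.Tendsto (fun t : ℝ => β * t) Filter.atTop Filter.atTop :=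
        Filter.Tendsto.const_mul_atTop hβ Filter.tendsto_id
      have h3 : Filter.Tendsto (fun t : ℝ => Real.exp (-β * t)) Filter.atTop (𝓝 0) := by
        have := Real.tendsto_exp_neg_atTop_nhds_zero.comp h2
        simpa [Function.comp_def, neg_mul] using this
      simpa using h3.const_mul (C₂ * 2 ^ (d + 1))
    have h4 : 0 < 2 * C₁ * ((2:ℝ) ^ α - 1) := by nlinarith
    have := (h1.eventually_lt_const h4).and (Filter.eventually_ge_atTop (0:ℝ))
    obtain ⟨T, hT1, hT2⟩ := this.exists
    exact ⟨T, hT2, hT1⟩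
  set L : ℝ := C₁ + C₂ * 2 ^ d with hL
  have hLpos : 0 < L := by positivity
  refine ⟨min (1/2) (Real.exp (-((L+1)*T))), by positivity, ?_⟩
  intro k hk hk0 hkδ
  have hkhalf : k 0 < 1/2 := lt_of_lt_of_le hkδ (min_le_left _ _)
  have hkexp : k 0 < Real.exp (-((L+1)*T)) := lt_of_lt_of_le hkδ (min_le_right _ _)
  -- Step A : k ≤ 1 on [0, T]
  have h2d : (1:ℝ) ≤ 2 ^ d := one_le_pow₀ (by norm_num)
  have hA : ∀ t ∈ Set.Icc 0 T, k t ≤ 1 := by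
    have key : ∀ t ∈ Set.Icc (0:ℝ) T, k t ≤ k 0 * Real.exp ((L+1)*t) := by
      refine barrier_Icc (f' := fun t =>
          C₁ * k t * (1 - k t ^ α) + C₂ * k t ^ (d + 1) * Real.exp (-β * t))
        (B' := fun t => k 0 * (Real.exp ((L+1)*t) * ((L+1)*1)))
        (fun t ht => hk t ht) (fun t _ => (((hasDerivAt_id t).const_mul (L+1)).exp.const_mul (k 0)))
        (by simp) ?_
      intro t ht heq
      have hpos : 0 < k t := by rw [heq]; positivity
      have hle1 : k t ≤ 1 := by
        rw [heq]
        have h1 : k 0 * Real.exp ((L+1)*t) ≤ Real.exp (-((L+1)*T)) * Real.exp ((L+1)*T) := by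
          apply mul_le_mul hkexp.le (Real.exp_le_exp.mpr (by nlinarith [ht.2.le])) (Real.exp_pos _).le (Real.exp_pos _).le
        calc k 0 * Real.exp ((L+1)*t) ≤ Real.exp (-((L+1)*T)) * Real.exp ((L+1)*T) := h1
          _ = 1 := by rw [← Real.exp_add]; simp
      have hrpow : 0 ≤ k t ^ α := Real.rpow_nonneg hpos.le α
      have hpow : k t ^ (d+1) ≤ k t := by
        calc k t ^ (d+1) ≤ k t ^ 1 := pow_le_pow_of_le_one hpos.le hle1 (by omega)
          _ = k t := pow_one _
      have hexp : Real.exp (-β*t) ≤ 1 := Real.exp_le_one_iff.mpr (by nlinarith [ht.1])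
      have hexp0 : 0 < Real.exp (-β*t) := Real.exp_pos _
      have hrhs : k 0 * (Real.exp ((L+1)*t) * ((L+1)*1)) = (L+1) * k t := by
        rw [heq]; ring
      rw [hrhs, hL]
      have hpownn : 0 ≤ k t ^ (d+1) := pow_nonneg hpos.le _
      have e1 : C₁ * k t * (1 - k t ^ α) ≤ C₁ * k t := by nlinarith [mul_nonneg (mul_nonneg hC₁.le hpos.le) hrpow]
      have e2 : C₂ * k t ^ (d+1) * Real.exp (-β*t) ≤ C₂ * k t ^ (d+1) := by nlinarith [mul_nonneg hC₂.le hpownn]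
      have e3 : C₂ * k t ^ (d+1) ≤ C₂ * k t := mul_le_mul_of_nonneg_left hpow hC₂.le
      have e4 : C₂ * k t ≤ C₂ * 2^d * k t := by nlinarith [mul_nonneg (mul_nonneg (sub_nonneg.mpr h2d) hC₂.le) hpos.le]
      linarith [hpos, e1, e2, e3, e4]
    intro t ht
    have h1 := key t ht
    have h2 : k 0 * Real.exp ((L+1)*t) ≤ Real.exp (-((L+1)*T)) * Real.exp ((L+1)*T) :=
      mul_le_mul hkexp.le (Real.exp_le_exp.mpr (by nlinarith [ht.2])) (Real.exp_pos _).le (Real.exp_pos _).le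
    calc k t ≤ k 0 * Real.exp ((L+1)*t) := h1
      _ ≤ Real.exp (-((L+1)*T)) * Real.exp ((L+1)*T) := h2
      _ = 1 := by rw [← Real.exp_add]; simp
  -- Step B : k ≤ 2 on [T, ∞)
  have hB2 : ∀ t, T ≤ t → k t ≤ 2 := by
    refine barrier_Ici (f' := fun t =>
        C₁ * k t * (1 - k t ^ α) + C₂ * k t ^ (d + 1) * Real.exp (-β * t))
      (B' := fun _ => 0)
      (fun t ht => hk t (le_trans hT0 ht)) (fun t _ => hasDerivAt_const t 2)
      (le_trans (hA T ⟨hT0, le_rfl⟩) one_le_two) ?_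
    intro t ht heq
    rw [heq]
    have hmono : C₂ * 2^(d+1) * Real.exp (-β*t) ≤ C₂ * 2^(d+1) * Real.exp (-β*T) := by
      apply mul_le_mul_of_nonneg_left (Real.exp_le_exp.mpr (by nlinarith)) (by positivity)
    nlinarith [hmono, hT]
  have hk2 : ∀ t, 0 ≤ t → k t ≤ 2 := by
    intro t ht
    rcases le_total t T with h | h
    · exact le_trans (hA t ⟨ht, h⟩) one_le_two
    · exact hB2 t h
  -- Step C : lower bound
  set m₀ : ℝ := min (k 0) (1/2) with hm₀
  have hm₀pos : 0 < m₀ := lt_min hk0 (by norm_num)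
  have hm₀lt1 : m₀ < 1 := lt_of_le_of_lt (min_le_right _ _) (by norm_num)
  have hkm : ∀ t, 0 ≤ t → m₀ ≤ k t := by
    refine barrier_Ici (f := fun _ => m₀) (f' := fun _ => 0)
      (B' := fun t => C₁ * k t * (1 - k t ^ α) + C₂ * k t ^ (d + 1) * Real.exp (-β * t))
      (fun t _ => hasDerivAt_const t m₀) (fun t ht => hk t ht)
      (min_le_left _ _) ?_
    intro t ht heq
    rw [show k t = m₀ from heq.symm]
    have hm1 : m₀ ^ α < 1 := Real.rpow_lt_one hm₀pos.le hm₀lt1 hα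
    have h1 : 0 < C₁*m₀*(1-m₀^α) := mul_pos (mul_pos hC₁ hm₀pos) (sub_pos.mpr hm1)
    have h2 : 0 ≤ C₂*m₀^(d+1)*Real.exp (-β*t) := by positivity
    linarith
  -- Step D : the transformed function v and its derivative
  set ε : ℝ := min β (C₁ * α / 2) with hε
  have hεpos : 0 < ε := lt_min hβ (by positivity)
  have hεβ : ε ≤ β := min_le_left _ _
  have hεc : ε ≤ C₁ * α / 2 := min_le_right _ _
  set v : ℝ → ℝ := fun t => (k t ^ (-α) - 1) * Real.exp (ε * t) with hv
  set V : ℝ → ℝ := fun t =>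
    (ε - α*C₁) * v t - α*C₂ * k t ^ d * k t ^ (-α) * Real.exp ((ε - β)*t) with hV
  have hkpos : ∀ t, 0 ≤ t → 0 < k t := fun t ht => lt_of_lt_of_le hm₀pos (hkm t ht)
  have hvderiv : ∀ t, 0 ≤ t → HasDerivAt v (V t) t := by
    intro t ht
    have hx : 0 < k t := hkpos t ht
    have h1 : HasDerivAt (fun s => k s ^ (-α))
        ((C₁ * k t * (1 - k t ^ α) + C₂ * k t ^ (d + 1) * Real.exp (-β * t)) *
          (-α) * k t ^ (-α - 1)) t :=
      (hk t ht).rpow_const (Or.inl (ne_of_gt hx))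
    have h2 : HasDerivAt (fun s => Real.exp (ε * s)) (Real.exp (ε * t) * (ε * 1)) t :=
      ((hasDerivAt_id t).const_mul ε).exp
    have h3 := (h1.sub_const 1).mul h2
    refine (h3 : HasDerivAt v _ t).congr_deriv ?_; symm
    have p1 : k t ^ (-α - 1) * k t = k t ^ (-α) := by
      rw [← Real.rpow_add_one (ne_of_gt hx) (-α - 1)]; ring_nf
    have p2 : k t ^ (-α) * k t ^ α = 1 := by
      rw [← Real.rpow_add hx]; simp
    have p3 : k t ^ (-α - 1) * k t ^ (d + 1) = k t ^ d * k t ^ (-α) := by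
      rw [← Real.rpow_natCast (k t) (d+1), ← Real.rpow_natCast (k t) d,
        ← Real.rpow_add hx, ← Real.rpow_add hx]
      congr 1
      push_cast
      ring
    have e1 : Real.exp ((ε - β)*t) = Real.exp (ε*t) * Real.exp (-β*t) := by
      rw [← Real.exp_add]; ring_nf
    show (ε - α*C₁) * ((k t ^ (-α) - 1) * Real.exp (ε * t)) - α*C₂ * k t ^ d * k t ^ (-α) * Real.exp ((ε - β)*t) = _
    rw [e1]
    linear_combination (α*C₁*Real.exp (ε*t)*(1 - k t ^ α)) * p1
      - (α*C₁*Real.exp (ε*t)) * p2 + (α*C₂*Real.exp (ε*t)*Real.exp (-β*t)) * p3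
  -- Step E : uniform bound on v
  set c : ℝ := C₁ * α / 2 with hc
  have hcpos : 0 < c := by positivity
  set K : ℝ := α * C₂ * 2^d * m₀ ^ (-α) with hK
  have hKnn : 0 ≤ K := by
    apply mul_nonneg (mul_nonneg (mul_nonneg hα.le hC₂.le) (by positivity))
      (Real.rpow_nonneg hm₀pos.le _)
  set Bc : ℝ := max |v 0| (K / c) + 1 with hBc
  have hmax0 : 0 ≤ max |v 0| (K / c) := le_trans (abs_nonneg _) (le_max_left _ _)
  have hBc1 : 1 ≤ Bc := by simp only [hBc]; linarith
  have hKc : K ≤ c * (Bc - 1) := by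
    have h1 : K / c ≤ Bc - 1 := by
      simp only [hBc]; have := le_max_right |v 0| (K / c); linarith
    calc K = c * (K / c) := by field_simp
      _ ≤ c * (Bc - 1) := mul_le_mul_of_nonneg_left h1 hcpos.le
  have hεα : ε - α*C₁ ≤ -c := by simp only [hc]; linarith
  have hup : ∀ t, 0 ≤ t → v t ≤ Bc := by
    refine barrier_Ici (f' := V) (B := fun _ => Bc) (B' := fun _ => 0)
      hvderiv (fun t _ => hasDerivAt_const t Bc) ?_ ?_
    · have h1 := le_max_left |v 0| (K / c); have h2 := le_abs_self (v 0)
      simp only [hBc]; linarith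
    · intro t ht heq
      have hx := hkpos t ht
      have hF : 0 ≤ α*C₂ * k t ^ d * k t ^ (-α) * Real.exp ((ε-β)*t) :=
        mul_nonneg (mul_nonneg (mul_nonneg (by positivity) (pow_nonneg hx.le _))
          (Real.rpow_nonneg hx.le _)) (Real.exp_pos _).le
      simp only [hV]
      rw [heq]
      nlinarith [mul_le_mul_of_nonneg_right hεα (by linarith : (0:ℝ) ≤ Bc)]
  have hlo : ∀ t, 0 ≤ t → -Bc ≤ v t := by
    refine barrier_Ici (f := fun _ => -Bc) (f' := fun _ => 0) (B := v) (B' := V)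
      (fun t _ => hasDerivAt_const t (-Bc)) hvderiv ?_ ?_
    · have h1 := le_max_left |v 0| (K / c); have h2 := neg_abs_le (v 0)
      simp only [hBc]; linarith
    · intro t ht heq
      have hx := hkpos t ht
      have f1 : k t ^ d ≤ 2^d := pow_le_pow_left₀ hx.le (hk2 t ht) d
      have f2 : k t ^ (-α) ≤ m₀ ^ (-α) :=
        Real.rpow_le_rpow_of_nonpos hm₀pos (hkm t ht) (by linarith)
      have f3 : Real.exp ((ε-β)*t) ≤ 1 := by
        rw [Real.exp_le_one_iff]
        nlinarith [mul_nonneg (sub_nonneg.mpr hεβ) ht]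
      have a0 : (0:ℝ) ≤ α*C₂ := by positivity
      have c0 : 0 ≤ k t ^ (-α) := Real.rpow_nonneg hx.le _
      have m0' : 0 ≤ m₀ ^ (-α) := Real.rpow_nonneg hm₀pos.le _
      have s1 : α*C₂ * k t ^ d ≤ α*C₂ * 2^d := mul_le_mul_of_nonneg_left f1 a0
      have s2 : α*C₂ * k t ^ d * k t ^ (-α) ≤ α*C₂ * 2^d * m₀^(-α) :=
        mul_le_mul s1 f2 c0 (by positivity)
      have s3 : α*C₂ * k t ^ d * k t ^ (-α) * Real.exp ((ε-β)*t) ≤ α*C₂ * 2^d * m₀^(-α) * 1 :=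
        mul_le_mul s2 f3 (Real.exp_pos _).le (mul_nonneg (by positivity) m0')
      have hFK : α*C₂ * k t ^ d * k t ^ (-α) * Real.exp ((ε-β)*t) ≤ K := by
        simp only [hK]; linarith
      simp only [hV]
      rw [show v t = -Bc from heq.symm]
      nlinarith [mul_le_mul_of_nonneg_right hεα (by linarith : (0:ℝ) ≤ Bc)]
  have hvB : ∀ t, 0 ≤ t → |v t| ≤ Bc := fun t ht => abs_le.mpr ⟨hlo t ht, hup t ht⟩
  -- Step F : convert back to k
  set M : ℝ := α⁻¹ * 2 ^ (1+α) with hM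
  have hMpos : 0 < M := by
    apply mul_pos (inv_pos.mpr hα) (Real.rpow_pos_of_pos two_pos _)
  refine ⟨M * Bc, mul_pos hMpos (lt_of_lt_of_le one_pos hBc1), ?_⟩
  intro t ht
  have hx := hkpos t ht
  have hmem1 : (1:ℝ) ∈ Set.Ici ((2:ℝ)^(-α)) :=
    Real.rpow_le_one_of_one_le_of_nonpos one_le_two (by linarith)
  have hmem2 : k t ^ (-α) ∈ Set.Ici ((2:ℝ)^(-α)) :=
    Real.rpow_le_rpow_of_nonpos hx (hk2 t ht) (by linarith)
  have hlip : ‖(k t ^ (-α)) ^ (-α⁻¹) - (1:ℝ) ^ (-α⁻¹)‖ ≤ M * ‖k t ^ (-α) - 1‖ := by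
    have := Convex.norm_image_sub_le_of_norm_hasDerivWithin_le (C := M)
      (f := fun y : ℝ => y ^ (-α⁻¹)) (f' := fun y : ℝ => (-α⁻¹) * y ^ (-α⁻¹ - 1))
      (s := Set.Ici ((2:ℝ)^(-α)))
      (fun y hy => (Real.hasDerivAt_rpow_const
        (Or.inl (ne_of_gt (lt_of_lt_of_le (Real.rpow_pos_of_pos two_pos _) hy)))).hasDerivWithinAt)
      ?_ (convex_Ici _) hmem1 hmem2
    · exact this
    · intro y hy
      have hy0 : 0 < y := lt_of_lt_of_le (Real.rpow_pos_of_pos two_pos _) hy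
      have hinv : (0:ℝ) < α⁻¹ := inv_pos.mpr hα
      have hyb : y ^ (-α⁻¹-1) ≤ ((2:ℝ)^(-α)) ^ (-α⁻¹-1) :=
        Real.rpow_le_rpow_of_nonpos (Real.rpow_pos_of_pos two_pos _) hy (by linarith)
      have hcalc : ((2:ℝ)^(-α)) ^ (-α⁻¹-1) = 2 ^ (1+α) := by
        rw [← Real.rpow_mul (by norm_num : (0:ℝ) ≤ 2)]
        congr 1
        field_simp
        ring
      rw [Real.norm_eq_abs, abs_mul, abs_neg, abs_of_pos hinv,
        abs_of_pos (Real.rpow_pos_of_pos hy0 _), hM]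
      apply mul_le_mul_of_nonneg_left _ hinv.le
      rw [← hcalc]; exact hyb
  have hid : (k t ^ (-α)) ^ (-α⁻¹) = k t := by
    rw [← Real.rpow_mul hx.le, show (-α)*(-α⁻¹) = 1 by field_simp, Real.rpow_one]
  have hu : |k t ^ (-α) - 1| ≤ Bc * Real.exp (-(ε*t)) := by
    have h := hvB t ht
    have h2 : |k t ^ (-α) - 1| * Real.exp (ε*t) ≤ Bc := by
      simpa [hv, abs_mul, abs_of_pos (Real.exp_pos (ε*t))] using h
    calc |k t ^ (-α) - 1|
        = |k t ^ (-α) - 1| * Real.exp (ε*t) * Real.exp (-(ε*t)) := by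
          rw [mul_assoc, ← Real.exp_add]; simp
      _ ≤ Bc * Real.exp (-(ε*t)) := mul_le_mul_of_nonneg_right h2 (Real.exp_pos _).le
  calc |k t - 1| = ‖(k t ^ (-α)) ^ (-α⁻¹) - (1:ℝ) ^ (-α⁻¹)‖ := by
        rw [hid, Real.one_rpow, Real.norm_eq_abs]
    _ ≤ M * ‖k t ^ (-α) - 1‖ := hlip
    _ = M * |k t ^ (-α) - 1| := by rw [Real.norm_eq_abs]
    _ ≤ M * (Bc * Real.exp (-(ε*t))) := mul_le_mul_of_nonneg_left hu hMpos.le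
    _ = (M * Bc) * Real.exp (-ε * t) := by rw [neg_mul]; ring
end

section
/- Let f, g be nonnegative radially symmetric integrable functions on ℝ^d with f ≺ g (i.e., ∫_{B(0,r)} f ≤ ∫_{B(0,r)} g for all r), and let W ∈ L^1(ℝ^d) be nonnegative, radially symmetric and radially decreasing. Then for every r > 0, ∫_{B(0,r)} (f*W)(x) dx ≤ ∫_{B(0,r)} (g*W)(x) dx + ‖W‖_{L^1} · sup_{s>0} (∫_{B(0,s)} f - ∫_{B(0,s)} g) — in particular, since the sup is ≤ 0, ∫_{B(0,r)} f*W dx ≤ ∫_{B(0,r)} g*W dx. -/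
open MeasureTheory Real
open scoped Convolution Topology

section Stmt10Aux

open MeasureTheory Real Metric Set Filter
open scoped Convolution Topology ENNReal RealInnerProductSpace


variable {d : ℕ}

local notation "E" => EuclideanSpace ℝ (Fin d)

lemma vol_level (a : ℝ≥0∞) :
    volume ({t : ℝ | ENNReal.ofReal t < a} ∩ Ioi 0) = a := by
  rcases eq_or_ne a ⊤ with rfl | ha
  · have h : {t : ℝ | ENNReal.ofReal t < ⊤} ∩ Ioi 0 = Ioi (0:ℝ) := by
      ext t; simp [ENNReal.ofReal_lt_top]
    rw [h, Real.volume_Ioi]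
  · have h : {t : ℝ | ENNReal.ofReal t < a} ∩ Ioi 0 = Ioo 0 a.toReal := by
      ext t
      simp only [mem_inter_iff, mem_setOf_eq, mem_Ioi, mem_Ioo]
      constructor
      · rintro ⟨h1, h2⟩; exact ⟨h2, (ENNReal.ofReal_lt_iff_lt_toReal h2.le ha).1 h1⟩
      · rintro ⟨h1, h2⟩; exact ⟨(ENNReal.ofReal_lt_iff_lt_toReal h1.le ha).2 h2, h1⟩
    rw [h, Real.volume_Ioo, sub_zero, ENNReal.ofReal_toReal ha]

set_option maxHeartbeats 1000000 in
lemma ball_lintegral_anti (W : E → ℝ)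
    (hW_dec : ∀ x y : E, ‖x‖ ≤ ‖y‖ → W y ≤ W x)
    (W₀ : E → ℝ≥0∞) (hW₀m : Measurable W₀)
    (hW₀e : (fun x => ENNReal.ofReal (W x)) =ᵐ[volume] W₀)
    (r : ℝ) {c c' : E} (hcc : ‖c‖ ≤ ‖c'‖) :
    ∫⁻ u in Metric.ball c' r, W₀ u ≤ ∫⁻ u in Metric.ball c r, W₀ u := by
  classical
  rcases eq_or_ne c' c with rfl | hne
  · exact le_rfl
  set v : E := c' - c with hv_def
  have hv : v ≠ 0 := sub_ne_zero.2 hne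
  have hv2 : (0:ℝ) < ‖v‖ ^ 2 := by
    have := norm_pos_iff.2 hv
    positivity
  set R := Submodule.reflection ((ℝ ∙ v)ᗮ) with hR_def
  have hRv : R v = -v := Submodule.reflection_orthogonalComplement_singleton_eq_neg v
  have hRz : ∀ z : E, R z = z - ((2 * ⟪v, z⟫) / ‖v‖ ^ 2) • v := by
    intro z
    have hmem : z - (⟪v, z⟫ / ‖v‖ ^ 2) • v ∈ (ℝ ∙ v)ᗮ := by
      rw [Submodule.mem_orthogonal_singleton_iff_inner_right, inner_sub_right,
        real_inner_smul_right, real_inner_self_eq_norm_sq]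
      field_simp
      ring
    have h1 : R (z - (⟪v, z⟫ / ‖v‖ ^ 2) • v) = z - (⟪v, z⟫ / ‖v‖ ^ 2) • v :=
      Submodule.reflection_mem_subspace_eq_self hmem
    have h2 : R ((⟪v, z⟫ / ‖v‖ ^ 2) • v) = -((⟪v, z⟫ / ‖v‖ ^ 2) • v) := by
      rw [R.map_smul, hRv, smul_neg]
    calc R z = R (z - (⟪v, z⟫ / ‖v‖ ^ 2) • v) + R ((⟪v, z⟫ / ‖v‖ ^ 2) • v) := by
          rw [← map_add, sub_add_cancel]
      _ = z - ((2 * ⟪v, z⟫) / ‖v‖ ^ 2) • v := by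
          rw [h1, h2]; module
  set mid : E := (2⁻¹ : ℝ) • (c + c') with hmid_def
  set m : ℝ := ⟪v, mid⟫ with hm_def
  set σ : E → E := fun x => R (x - mid) + mid with hσ_def
  have hσ_eq : ∀ x : E, σ x = x - ((2 * (⟪v, x⟫ - m)) / ‖v‖ ^ 2) • v := by
    intro x
    have h0 : σ x = R (x - mid) + mid := rfl
    rw [h0, hRz (x - mid), inner_sub_right, ← hm_def]
    abel
  have hm_val : m = 2⁻¹ * (‖c'‖ ^ 2 - ‖c‖ ^ 2) := by
    rw [hm_def, hmid_def, hv_def, real_inner_smul_right, inner_sub_left, inner_add_right,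
      inner_add_right]
    rw [real_inner_self_eq_norm_sq, real_inner_self_eq_norm_sq, real_inner_comm c c']
    ring
  have hm0 : 0 ≤ m := by
    rw [hm_val]
    nlinarith [norm_nonneg c, norm_nonneg c', hcc]
  have hside : ∀ x : E, dist x c ≤ dist x c' → ⟪v, x⟫ ≤ m := by
    intro x h
    rw [dist_eq_norm, dist_eq_norm] at h
    have h2 : ‖x - c‖ ^ 2 ≤ ‖x - c'‖ ^ 2 := by
      exact pow_le_pow_left₀ (norm_nonneg _) h 2
    rw [norm_sub_sq_real, norm_sub_sq_real] at h2
    have h3 : ⟪v, x⟫ = ⟪x, c'⟫ - ⟪x, c⟫ := by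
      rw [hv_def, inner_sub_left, real_inner_comm c' x, real_inner_comm c x]
    rw [h3, hm_val]
    linarith
  have hσnorm : ∀ x : E, ⟪v, x⟫ ≤ m → ‖x‖ ≤ ‖σ x‖ := by
    intro x hx
    have hq : ‖σ x‖ ^ 2 = ‖x‖ ^ 2 + (4 * m * (m - ⟪v, x⟫)) / ‖v‖ ^ 2 := by
      rw [hσ_eq x, norm_sub_sq_real, real_inner_smul_right, norm_smul, mul_pow,
        Real.norm_eq_abs, sq_abs, real_inner_comm x v]
      field_simp
      ring
    have hge : ‖x‖ ^ 2 ≤ ‖σ x‖ ^ 2 := by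
      rw [hq]
      have : 0 ≤ (4 * m * (m - ⟪v, x⟫)) / ‖v‖ ^ 2 :=
        div_nonneg (by nlinarith) hv2.le
      linarith
    nlinarith [norm_nonneg x, norm_nonneg (σ x)]
  have hmid1 : c' - mid = (2⁻¹ : ℝ) • v := by rw [hmid_def, hv_def]; module
  have hmid2 : c - mid = -((2⁻¹ : ℝ) • v) := by rw [hmid_def, hv_def]; module
  have hσc' : σ c' = c := by
    have h1 : ⟪v, c'⟫ - m = ‖v‖ ^ 2 / 2 := by
      rw [hm_def, ← inner_sub_right, hmid1, real_inner_smul_right, real_inner_self_eq_norm_sq]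
      ring
    rw [hσ_eq, h1, show (2 * (‖v‖ ^ 2 / 2)) / ‖v‖ ^ 2 = 1 by field_simp, one_smul, hv_def]
    abel
  have hσc : σ c = c' := by
    have h1 : ⟪v, c⟫ - m = -(‖v‖ ^ 2 / 2) := by
      rw [hm_def, ← inner_sub_right, hmid2, inner_neg_right, real_inner_smul_right,
        real_inner_self_eq_norm_sq]
      ring
    rw [hσ_eq, h1, show (2 * -(‖v‖ ^ 2 / 2)) / ‖v‖ ^ 2 = -1 by field_simp, hv_def]
    module
  have hσdist : ∀ x y : E, dist (σ x) (σ y) = dist x y := by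
    intro x y
    have h0 : σ x = R (x - mid) + mid := rfl
    have h0' : σ y = R (y - mid) + mid := rfl
    rw [dist_eq_norm, dist_eq_norm, h0, h0',
      show R (x - mid) + mid - (R (y - mid) + mid) = R (x - mid) - R (y - mid) from by abel,
      ← map_sub, show x - mid - (y - mid) = x - y from by abel, R.norm_map]
  have hinvol : Function.Involutive σ := by
    intro x
    have h0 : σ (σ x) = R (R (x - mid) + mid - mid) + mid := rfl
    rw [h0, add_sub_cancel_right, hR_def, Submodule.reflection_reflection, sub_add_cancel]
  have hmp : MeasurePreserving σ volume volume := by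
    have h1 : MeasurePreserving (fun x : E => x - mid) volume volume :=
      measurePreserving_sub_right volume mid
    have h3 : MeasurePreserving (fun x : E => x + mid) volume volume :=
      measurePreserving_add_right volume mid
    exact h3.comp (R.measurePreserving.comp h1)
  have hemb : MeasurableEmbedding σ := by
    exact MeasurableEquiv.measurableEmbedding
      { toFun := σ
        invFun := σ
        left_inv := hinvol.leftInverse
        right_inv := hinvol.rightInverse
        measurable_toFun := hmp.measurable
        measurable_invFun := hmp.measurable }
  have hd1 : ∀ x, dist (σ x) c' = dist x c := fun x => by rw [← hσc, hσdist]
  have hd2 : ∀ x, dist (σ x) c = dist x c' := fun x => by rw [← hσc', hσdist]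
  have hpre : σ ⁻¹' (Metric.ball c' r \ Metric.ball c r) =
      Metric.ball c r \ Metric.ball c' r := by
    ext x
    simp only [mem_preimage, mem_diff, Metric.mem_ball, hd1, hd2]
    try tauto
  have h_second : (∫⁻ u in Metric.ball c' r \ Metric.ball c r, W₀ u) ≤
      ∫⁻ u in Metric.ball c r \ Metric.ball c' r, W₀ u := by
    have hswap := hmp.setLIntegral_comp_preimage_emb hemb W₀
      (Metric.ball c' r \ Metric.ball c r)
    rw [hpre] at hswap
    rw [← hswap]
    have hae1 : (fun x => ENNReal.ofReal (W x)) ∘ σ =ᵐ[volume] W₀ ∘ σ :=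
      ae_eq_comp hmp.aemeasurable (by rw [hmp.map_eq]; exact hW₀e)
    refine setLIntegral_mono_ae (hW₀m.aemeasurable.restrict) ?_
    filter_upwards [hae1, hW₀e] with x h1' h2 hx
    have h1 : W₀ (σ x) = ENNReal.ofReal (W (σ x)) := by
      simpa [Function.comp] using h1'.symm
    have hxc : dist x c ≤ dist x c' := by
      rcases hx with ⟨hx1, hx2⟩
      rw [Metric.mem_ball] at hx1
      rw [Metric.mem_ball] at hx2
      push_neg at hx2
      linarith
    have hnorm : ‖x‖ ≤ ‖σ x‖ := hσnorm x (hside x hxc)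
    calc W₀ (σ x) = ENNReal.ofReal (W (σ x)) := h1
      _ ≤ ENNReal.ofReal (W x) := ENNReal.ofReal_le_ofReal (hW_dec _ _ hnorm)
      _ = W₀ x := h2
  calc ∫⁻ u in Metric.ball c' r, W₀ u
      = (∫⁻ u in Metric.ball c' r ∩ Metric.ball c r, W₀ u)
        + ∫⁻ u in Metric.ball c' r \ Metric.ball c r, W₀ u :=
        (lintegral_inter_add_diff W₀ _ measurableSet_ball).symm
    _ ≤ (∫⁻ u in Metric.ball c r ∩ Metric.ball c' r, W₀ u)
        + ∫⁻ u in Metric.ball c r \ Metric.ball c' r, W₀ u := by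
        rw [inter_comm]
        exact add_le_add le_rfl h_second
    _ = ∫⁻ u in Metric.ball c r, W₀ u :=
        lintegral_inter_add_diff W₀ _ measurableSet_ball





lemma vol_level' (a : ℝ≥0∞) :
    volume ({t : ℝ | ENNReal.ofReal t < a} ∩ Ioi 0) = a := by
  rcases eq_or_ne a ⊤ with rfl | ha
  · have h : {t : ℝ | ENNReal.ofReal t < ⊤} ∩ Ioi 0 = Ioi (0:ℝ) := by
      ext t; simp [ENNReal.ofReal_lt_top]
    rw [h, Real.volume_Ioi]
  · have h : {t : ℝ | ENNReal.ofReal t < a} ∩ Ioi 0 = Ioo 0 a.toReal := by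
      ext t
      simp only [mem_inter_iff, mem_setOf_eq, mem_Ioi, mem_Ioo]
      constructor
      · rintro ⟨h1, h2⟩; exact ⟨h2, (ENNReal.ofReal_lt_iff_lt_toReal h2.le ha).1 h1⟩
      · rintro ⟨h1, h2⟩; exact ⟨(ENNReal.ofReal_lt_iff_lt_toReal h1.le ha).2 h2, h1⟩
    rw [h, Real.volume_Ioo, sub_zero, ENNReal.ofReal_toReal ha]

lemma superlevel_le (hd : 1 ≤ d) (F G K : E → ℝ≥0∞)
    (hK : Measurable K)
    (hball : ∀ ρ : ℝ, (∫⁻ y in Metric.ball (0:E) ρ, F y) ≤ ∫⁻ y in Metric.ball (0:E) ρ, G y)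
    (huniv : (∫⁻ y, F y) ≤ ∫⁻ y, G y)
    (hKmono : ∀ y z : E, ‖y‖ ≤ ‖z‖ → K z ≤ K y)
    (a : ℝ≥0∞) :
    (∫⁻ y in {y : E | a < K y}, F y) ≤ ∫⁻ y in {y : E | a < K y}, G y := by
  haveI : Nonempty (Fin d) := ⟨⟨0, hd⟩⟩
  set S := {y : E | a < K y} with hS_def
  have hdown : ∀ y z : E, ‖z‖ ≤ ‖y‖ → y ∈ S → z ∈ S := by
    intro y z h hy
    exact lt_of_lt_of_le hy (hKmono z y h)
  by_cases hbdd : BddAbove ((fun y : E => ‖y‖) '' S)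
  · rcases S.eq_empty_or_nonempty with hemp | hne
    · rw [hemp]; simp
    · set ρ := sSup ((fun y : E => ‖y‖) '' S) with hρ
      have himg : ((fun y : E => ‖y‖) '' S).Nonempty := hne.image _
      have h1 : Metric.ball (0:E) ρ ⊆ S := by
        intro z hz
        rw [mem_ball_zero_iff] at hz
        obtain ⟨b, hb, hzb⟩ := exists_lt_of_lt_csSup himg hz
        obtain ⟨y, hyS, rfl⟩ := hb
        exact hdown y z hzb.le hyS
      have h2 : S ⊆ Metric.closedBall (0:E) ρ := by
        intro y hy
        rw [mem_closedBall_zero_iff]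
        exact le_csSup hbdd ⟨y, hy, rfl⟩
      have hae : S =ᵐ[volume] Metric.ball (0:E) ρ := by
        rw [MeasureTheory.ae_eq_set]
        constructor
        · refine measure_mono_null ?_ (Measure.addHaar_sphere volume (0:E) ρ)
          rintro y ⟨hy1, hy2⟩
          rw [mem_sphere_zero_iff_norm]
          have hle := mem_closedBall_zero_iff.1 (h2 hy1)
          have hnlt : ¬ ‖y‖ < ρ := fun h => hy2 (mem_ball_zero_iff.2 h)
          exact le_antisymm hle (not_lt.1 hnlt)
        · have : Metric.ball (0:E) ρ \ S = ∅ := by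
            rw [diff_eq_empty]; exact h1
          rw [this]; exact measure_empty
      rw [setLIntegral_congr hae, setLIntegral_congr hae]
      exact hball ρ
  · have hSuniv : S = univ := by
      ext z
      simp only [mem_univ, iff_true]
      obtain ⟨y, hy⟩ := not_bddAbove_iff.1 hbdd ‖z‖
      obtain ⟨⟨y', hy'S, rfl⟩, hzy⟩ := hy
      exact hdown y' z hzy.le hy'S
    rw [hSuniv]
    simpa [Measure.restrict_univ] using huniv

lemma layercake_mono (hd : 1 ≤ d) (F G K : E → ℝ≥0∞)
    (hF : Measurable F) (hG : Measurable G) (hK : Measurable K)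
    (hball : ∀ ρ : ℝ, (∫⁻ y in Metric.ball (0:E) ρ, F y) ≤ ∫⁻ y in Metric.ball (0:E) ρ, G y)
    (huniv : (∫⁻ y, F y) ≤ ∫⁻ y, G y)
    (hKmono : ∀ y z : E, ‖y‖ ≤ ‖z‖ → K z ≤ K y) :
    (∫⁻ y, F y * K y) ≤ ∫⁻ y, G y * K y := by
  set Q : Set (E × ℝ) := {p | ENNReal.ofReal p.2 < K p.1} with hQ_def
  have hQ : MeasurableSet Q :=
    measurableSet_lt (ENNReal.measurable_ofReal.comp measurable_snd) (hK.comp measurable_fst)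
  have key : ∀ (F : E → ℝ≥0∞), Measurable F →
      (∫⁻ y, F y * K y) =
        ∫⁻ t in Ioi (0:ℝ), ∫⁻ y in {y : E | ENNReal.ofReal t < K y}, F y := by
    intro F hF
    have hΦmeas : Measurable (fun p : E × ℝ => F p.1 * Q.indicator (fun _ => (1:ℝ≥0∞)) p) :=
      (hF.comp measurable_fst).mul (measurable_const.indicator hQ)
    have step1 : ∀ y : E,
        (∫⁻ t in Ioi (0:ℝ), F y * Q.indicator (fun _ => (1:ℝ≥0∞)) (y, t)) = F y * K y := by
      intro y
      rw [lintegral_const_mul]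
      · congr 1
        have hpt : (fun t : ℝ => Q.indicator (fun _ => (1:ℝ≥0∞)) (y, t)) =
            fun t : ℝ => ({t' : ℝ | ENNReal.ofReal t' < K y}).indicator (fun _ => (1:ℝ≥0∞)) t := by
          funext t
          by_cases h : ENNReal.ofReal t < K y <;>
            simp [Set.indicator_apply, hQ_def, h]
        rw [hpt]
        have hTm : MeasurableSet {t' : ℝ | ENNReal.ofReal t' < K y} :=
          measurableSet_lt ENNReal.measurable_ofReal measurable_const
        rw [lintegral_indicator hTm, setLIntegral_one, Measure.restrict_apply hTm,
          vol_level']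
      · exact (measurable_const.indicator hQ).comp measurable_prodMk_left
    calc (∫⁻ y, F y * K y)
        = ∫⁻ y, ∫⁻ t in Ioi (0:ℝ), F y * Q.indicator (fun _ => (1:ℝ≥0∞)) (y, t) :=
          (lintegral_congr step1).symm
      _ = ∫⁻ t in Ioi (0:ℝ), ∫⁻ y, F y * Q.indicator (fun _ => (1:ℝ≥0∞)) (y, t) :=
          lintegral_lintegral_swap hΦmeas.aemeasurable
      _ = ∫⁻ t in Ioi (0:ℝ), ∫⁻ y in {y : E | ENNReal.ofReal t < K y}, F y := by
          refine lintegral_congr fun t => ?_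
          have h : (fun y : E => F y * Q.indicator (fun _ => (1:ℝ≥0∞)) (y, t)) =
              fun y : E => ({y' : E | ENNReal.ofReal t < K y'}).indicator F y := by
            funext y
            by_cases h : ENNReal.ofReal t < K y <;> simp [Set.indicator_apply, hQ_def, h]
          rw [h, lintegral_indicator (measurableSet_lt measurable_const hK)]
  rw [key F hF, key G hG]
  exact lintegral_mono fun t =>
    superlevel_le hd F G K hK hball huniv hKmono (ENNReal.ofReal t)






theorem stmt_10' (hd : 1 ≤ d)
    (f g W : E → ℝ)
    (hf_nonneg : ∀ x, 0 ≤ f x) (hg_nonneg : ∀ x, 0 ≤ g x)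
    (hf_int : Integrable f) (hg_int : Integrable g)
    (hfg : ∀ r : ℝ, (∫ x in Metric.ball (0 : E) r, f x) ≤
      ∫ x in Metric.ball (0 : E) r, g x)
    (hW_nonneg : ∀ x, 0 ≤ W x)
    (hW_int : Integrable W)
    (hW_dec : ∀ x y : E, ‖x‖ ≤ ‖y‖ → W y ≤ W x) :
    ∀ r > (0 : ℝ),
      (∫ x in Metric.ball (0 : E) r, (f ⋆ W) x) ≤
        ∫ x in Metric.ball (0 : E) r, (g ⋆ W) x := by
  intro r _hr
  classical
  -- measurable representatives
  have hfae : AEMeasurable (fun y : E => ENNReal.ofReal (f y)) volume :=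
    ENNReal.measurable_ofReal.comp_aemeasurable hf_int.aemeasurable
  have hgae : AEMeasurable (fun y : E => ENNReal.ofReal (g y)) volume :=
    ENNReal.measurable_ofReal.comp_aemeasurable hg_int.aemeasurable
  have hWae : AEMeasurable (fun y : E => ENNReal.ofReal (W y)) volume :=
    ENNReal.measurable_ofReal.comp_aemeasurable hW_int.aemeasurable
  set F₀ := hfae.mk _ with hF₀def
  set G₀ := hgae.mk _ with hG₀def
  set W₀ := hWae.mk _ with hW₀def
  have hF₀m : Measurable F₀ := hfae.measurable_mk
  have hG₀m : Measurable G₀ := hgae.measurable_mk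
  have hW₀m : Measurable W₀ := hWae.measurable_mk
  have hF₀e : (fun y : E => ENNReal.ofReal (f y)) =ᵐ[volume] F₀ := hfae.ae_eq_mk
  have hG₀e : (fun y : E => ENNReal.ofReal (g y)) =ᵐ[volume] G₀ := hgae.ae_eq_mk
  have hW₀e : (fun y : E => ENNReal.ofReal (W y)) =ᵐ[volume] W₀ := hWae.ae_eq_mk
  -- the kernel
  set K : E → ℝ≥0∞ := fun y => ∫⁻ x in Metric.ball (0:E) r, W₀ (x - y) with hKdef
  have hKmeas : Measurable K := by
    have h1 : Measurable (fun p : E × E =>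
        (Metric.ball (0:E) r).indicator (fun _ => (1:ℝ≥0∞)) p.2 * W₀ (p.2 - p.1)) :=
      ((measurable_const.indicator measurableSet_ball).comp measurable_snd).mul
        (hW₀m.comp (measurable_snd.sub measurable_fst))
    have h2 : Measurable fun y : E => ∫⁻ x, (Metric.ball (0:E) r).indicator
        (fun _ => (1:ℝ≥0∞)) x * W₀ (x - y) := h1.lintegral_prod_right'
    have h3 : ∀ y : E, (∫⁻ x, (Metric.ball (0:E) r).indicator (fun _ => (1:ℝ≥0∞)) x
        * W₀ (x - y)) = K y := by
      intro y
      have heq : (fun x : E => (Metric.ball (0:E) r).indicator (fun _ => (1:ℝ≥0∞)) x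
          * W₀ (x - y)) =
          fun x : E => (Metric.ball (0:E) r).indicator (fun x => W₀ (x - y)) x := by
        funext x
        by_cases h : x ∈ Metric.ball (0:E) r <;> simp [Set.indicator_apply, h]
      rw [heq, lintegral_indicator measurableSet_ball]
    exact (funext h3) ▸ h2
  have hK_ball : ∀ y : E, K y = ∫⁻ u in Metric.ball (-y) r, W₀ u := by
    intro y
    have hmp : MeasurePreserving (fun u : E => u + y) volume volume :=
      measurePreserving_add_right volume y
    have hpre : (fun u : E => u + y) ⁻¹' (Metric.ball (0:E) r) = Metric.ball (-y) r := by
      ext u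
      simp only [mem_preimage, Metric.mem_ball, dist_eq_norm, sub_zero, sub_neg_eq_add]
    have h := hmp.setLIntegral_comp_preimage (s := Metric.ball (0:E) r) measurableSet_ball
      (f := fun x : E => W₀ (x - y)) (hW₀m.comp (measurable_id.sub measurable_const))
    rw [hpre] at h
    simp only [add_sub_cancel_right] at h
    exact h.symm
  have hKmono : ∀ y z : E, ‖y‖ ≤ ‖z‖ → K z ≤ K y := by
    intro y z h
    rw [hK_ball y, hK_ball z]
    exact ball_lintegral_anti W hW_dec W₀ hW₀m hW₀e r
      (by simpa [norm_neg] using h)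
  -- convolution rewritten as lintegral against the kernel
  have conv_eq : ∀ (h : E → ℝ), (∀ x, 0 ≤ h x) → Integrable h volume →
      ∀ (H₀ : E → ℝ≥0∞), Measurable H₀ →
      ((fun y : E => ENNReal.ofReal (h y)) =ᵐ[volume] H₀) →
      (∫⁻ x in Metric.ball (0:E) r, ENNReal.ofReal ((h ⋆ W) x)) = ∫⁻ t, H₀ t * K t := by
    intro h h_nn h_int H₀ hH₀m hH₀e
    have hprod := h_int.convolution_integrand (ContinuousLinearMap.lsmul ℝ ℝ) hW_int
    have hslice := hprod.prod_right_ae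
    have hae : ∀ᵐ x ∂(volume : Measure (EuclideanSpace ℝ (Fin d))),
        ENNReal.ofReal ((h ⋆ W) x) = ∫⁻ t, H₀ t * W₀ (x - t) := by
      filter_upwards [hslice] with x hx
      have hx' : Integrable (fun t : E => h t * W (x - t)) volume := by
        simpa [ContinuousLinearMap.lsmul_apply, smul_eq_mul] using hx
      have e1 : (h ⋆ W) x = ∫ t, h t * W (x - t) := by
        simp [convolution_def, ContinuousLinearMap.lsmul_apply, smul_eq_mul]
      rw [e1, ofReal_integral_eq_lintegral_ofReal hx'
        (Eventually.of_forall fun t => mul_nonneg (h_nn t) (hW_nonneg _))]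
      have hmp : MeasurePreserving (fun t : E => x - t) volume volume :=
        Measure.measurePreserving_sub_left volume x
      have hmap : (fun y : E => ENNReal.ofReal (W y))
          =ᵐ[Measure.map (fun t : E => x - t) volume] W₀ := by
        rw [hmp.map_eq]; exact hW₀e
      have hW_ae' := ae_eq_comp (f := fun t : E => x - t) hmp.aemeasurable hmap
      have hW_ae : (fun t : E => ENNReal.ofReal (W (x - t))) =ᵐ[volume]
          fun t : E => W₀ (x - t) := hW_ae'
      refine lintegral_congr_ae ?_
      filter_upwards [hH₀e, hW_ae] with t h1 h2
      rw [ENNReal.ofReal_mul (h_nn t), h1, h2]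
    have hres : (∫⁻ x in Metric.ball (0:E) r, ENNReal.ofReal ((h ⋆ W) x)) =
        ∫⁻ x in Metric.ball (0:E) r, ∫⁻ t, H₀ t * W₀ (x - t) :=
      lintegral_congr_ae (ae_restrict_of_ae hae)
    rw [hres]
    have hswapm : Measurable (fun p : E × E => H₀ p.2 * W₀ (p.1 - p.2)) :=
      (hH₀m.comp measurable_snd).mul (hW₀m.comp (measurable_fst.sub measurable_snd))
    rw [lintegral_lintegral_swap hswapm.aemeasurable]
    refine lintegral_congr fun t => ?_
    rw [lintegral_const_mul _ (show Measurable fun x : E => W₀ (x - t) from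
      hW₀m.comp (measurable_id.sub measurable_const))]
  -- the mass inequalities for F₀ / G₀
  have hball : ∀ ρ : ℝ, (∫⁻ y in Metric.ball (0:E) ρ, F₀ y) ≤
      ∫⁻ y in Metric.ball (0:E) ρ, G₀ y := by
    intro ρ
    have e1 : ENNReal.ofReal (∫ y in Metric.ball (0:E) ρ, f y) =
        ∫⁻ y in Metric.ball (0:E) ρ, F₀ y := by
      rw [ofReal_integral_eq_lintegral_ofReal hf_int.integrableOn
        (Eventually.of_forall fun y => hf_nonneg y)]
      exact lintegral_congr_ae (ae_restrict_of_ae hF₀e)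
    have e2 : ENNReal.ofReal (∫ y in Metric.ball (0:E) ρ, g y) =
        ∫⁻ y in Metric.ball (0:E) ρ, G₀ y := by
      rw [ofReal_integral_eq_lintegral_ofReal hg_int.integrableOn
        (Eventually.of_forall fun y => hg_nonneg y)]
      exact lintegral_congr_ae (ae_restrict_of_ae hG₀e)
    rw [← e1, ← e2]
    exact ENNReal.ofReal_le_ofReal (hfg ρ)
  have htot : (∫ y, f y) ≤ ∫ y, g y := by
    have hmono : Monotone fun n : ℕ => Metric.ball (0:E) n := fun a b hab =>
      Metric.ball_subset_ball (by exact_mod_cast hab)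
    have hU : (⋃ n : ℕ, Metric.ball (0:E) n) = univ := Metric.iUnion_ball_nat 0
    have h1 := tendsto_setIntegral_of_monotone (fun n : ℕ => measurableSet_ball) hmono
      (by rw [hU]; exact hf_int.integrableOn)
    have h2 := tendsto_setIntegral_of_monotone (fun n : ℕ => measurableSet_ball) hmono
      (by rw [hU]; exact hg_int.integrableOn)
    rw [hU] at h1 h2
    simp only [Measure.restrict_univ] at h1 h2
    exact le_of_tendsto_of_tendsto' h1 h2 fun n => hfg n
  have huniv : (∫⁻ y, F₀ y) ≤ ∫⁻ y, G₀ y := by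
    have e1 : ENNReal.ofReal (∫ y, f y) = ∫⁻ y, F₀ y := by
      rw [ofReal_integral_eq_lintegral_ofReal hf_int (Eventually.of_forall hf_nonneg)]
      exact lintegral_congr_ae hF₀e
    have e2 : ENNReal.ofReal (∫ y, g y) = ∫⁻ y, G₀ y := by
      rw [ofReal_integral_eq_lintegral_ofReal hg_int (Eventually.of_forall hg_nonneg)]
      exact lintegral_congr_ae hG₀e
    rw [← e1, ← e2]
    exact ENNReal.ofReal_le_ofReal htot
  -- main lintegral inequality
  have hmain : (∫⁻ x in Metric.ball (0:E) r, ENNReal.ofReal ((f ⋆ W) x)) ≤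
      ∫⁻ x in Metric.ball (0:E) r, ENNReal.ofReal ((g ⋆ W) x) := by
    rw [conv_eq f hf_nonneg hf_int F₀ hF₀m hF₀e, conv_eq g hg_nonneg hg_int G₀ hG₀m hG₀e]
    exact layercake_mono hd F₀ G₀ K hF₀m hG₀m hKmeas hball huniv hKmono
  -- back to Bochner integrals
  have hconv_nn : ∀ (h : E → ℝ), (∀ x, 0 ≤ h x) → ∀ x : E, 0 ≤ (h ⋆ W) x := by
    intro h hnn x
    rw [convolution_def]
    refine integral_nonneg fun t => ?_
    simp only [ContinuousLinearMap.lsmul_apply, smul_eq_mul]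
    exact mul_nonneg (hnn t) (hW_nonneg _)
  have hf_conv_int : IntegrableOn (f ⋆ W) (Metric.ball (0:E) r) volume :=
    (hf_int.integrable_convolution (ContinuousLinearMap.lsmul ℝ ℝ) hW_int).integrableOn
  have hg_conv_int : IntegrableOn (g ⋆ W) (Metric.ball (0:E) r) volume :=
    (hg_int.integrable_convolution (ContinuousLinearMap.lsmul ℝ ℝ) hW_int).integrableOn
  have e1 : ENNReal.ofReal (∫ x in Metric.ball (0:E) r, (f ⋆ W) x) =
      ∫⁻ x in Metric.ball (0:E) r, ENNReal.ofReal ((f ⋆ W) x) :=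
    ofReal_integral_eq_lintegral_ofReal hf_conv_int
      (Eventually.of_forall fun x => hconv_nn f hf_nonneg x)
  have e2 : ENNReal.ofReal (∫ x in Metric.ball (0:E) r, (g ⋆ W) x) =
      ∫⁻ x in Metric.ball (0:E) r, ENNReal.ofReal ((g ⋆ W) x) :=
    ofReal_integral_eq_lintegral_ofReal hg_conv_int
      (Eventually.of_forall fun x => hconv_nn g hg_nonneg x)
  rw [← e1, ← e2] at hmain
  have hg_nn : 0 ≤ ∫ x in Metric.ball (0:E) r, (g ⋆ W) x :=
    setIntegral_nonneg measurableSet_ball fun x _ => hconv_nn g hg_nonneg x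
  exact (ENNReal.ofReal_le_ofReal_iff hg_nn).1 hmain


end Stmt10Aux

/-- convolution with a nonnegative radially decreasing kernel
preserves the mass-concentration order `f ≺ g`. -/
theorem stmt_10 (d : ℕ) (hd : 1 ≤ d)
    (f g W : EuclideanSpace ℝ (Fin d) → ℝ)
    (hf_nonneg : ∀ x, 0 ≤ f x) (hg_nonneg : ∀ x, 0 ≤ g x)
    (hf_int : Integrable f) (hg_int : Integrable g)
    (hf_rad : ∀ x y : EuclideanSpace ℝ (Fin d), ‖x‖ = ‖y‖ → f x = f y)
    (hg_rad : ∀ x y : EuclideanSpace ℝ (Fin d), ‖x‖ = ‖y‖ → g x = g y)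
    (hfg : ∀ r : ℝ, (∫ x in Metric.ball (0 : EuclideanSpace ℝ (Fin d)) r, f x) ≤
      ∫ x in Metric.ball (0 : EuclideanSpace ℝ (Fin d)) r, g x)
    (hW_nonneg : ∀ x, 0 ≤ W x)
    (hW_int : Integrable W)
    (hW_rad : ∀ x y : EuclideanSpace ℝ (Fin d), ‖x‖ = ‖y‖ → W x = W y)
    (hW_dec : ∀ x y : EuclideanSpace ℝ (Fin d), ‖x‖ ≤ ‖y‖ → W y ≤ W x) :
    ∀ r > (0 : ℝ),
      (∫ x in Metric.ball (0 : EuclideanSpace ℝ (Fin d)) r, (f ⋆ W) x) ≤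
        ∫ x in Metric.ball (0 : EuclideanSpace ℝ (Fin d)) r, (g ⋆ W) x :=
  stmt_10' hd f g W hf_nonneg hg_nonneg hf_int hg_int hfg hW_nonneg hW_int hW_dec
end

section
/- Let d ≥ 3, m > 2 - 2/d, λ > 0. Define u_R = λ χ_{B(0,R)} / (c_d' R^d) where c_d' is the volume of the unit ball, and let W : ℝ^d → [0,∞) satisfy ∫_{B(0,R/2)} W dx ≥ c R^2 for all sufficiently large R (some c > 0). Then the energy E(u_R) = ∫ (1/(m-1)) u_R^m dx - (1/2)∫ u_R (u_R * W) dx satisfies E(u_R) ≤ C_1 λ^m R^{-d(m-1)} - C_2 λ^2 R^{-(d-2)} for large R with constants C_1, C_2 > 0, and hence E(u_R) < 0 for R sufficiently large (since d(m-1) > d-2 when m > 2 - 2/d). -/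
open MeasureTheory Real
open scoped Convolution Topology


private lemma stmt15_aux1 (d : ℕ) (m lam cball R : ℝ) (hlam : 0 < lam)
    (hcb : 0 < cball) (hR : 0 < R) :
    (1 / (m - 1)) * (lam / (cball * R ^ d)) ^ m * (cball * R ^ d)
      = ((1 / (m - 1)) * cball ^ ((1:ℝ) - m)) * lam ^ m * R ^ (-((d : ℝ) * (m - 1))) := by
  have hRd : (0 : ℝ) < R ^ d := by positivity
  have hcRd : (0 : ℝ) < cball * R ^ d := by positivity
  have h1 : (lam / (cball * R ^ d)) ^ m = lam ^ m / (cball ^ m * R ^ ((d : ℝ) * m)) := by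
    rw [Real.div_rpow hlam.le hcRd.le,
      Real.mul_rpow hcb.le hRd.le, ← Real.rpow_natCast R d, ← Real.rpow_mul hR.le]
  have h2 : cball ^ ((1 : ℝ) - m) = cball / cball ^ m := by
    rw [Real.rpow_sub hcb, Real.rpow_one]
  have h3 : R ^ (-((d : ℝ) * (m - 1))) = R ^ (d : ℝ) / R ^ ((d : ℝ) * m) := by
    rw [← Real.rpow_sub hR]
    congr 1
    ring
  have h4 : R ^ (d : ℝ) = R ^ d := Real.rpow_natCast R d
  rw [h1, h2, h3, h4]
  have hcm : cball ^ m ≠ 0 := (Real.rpow_pos_of_pos hcb m).ne'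
  have hRm : R ^ ((d : ℝ) * m) ≠ 0 := (Real.rpow_pos_of_pos hR _).ne'
  field_simp

private lemma stmt15_aux2 (d : ℕ) (cw lam cball R : ℝ) (hR : 0 < R) :
    (1 / 2) * ((lam / (cball * R ^ d)) * ((lam / (cball * R ^ d)) * (cw * R ^ 2))
        * (cball * (R / 2) ^ d))
      = (cw / (2 ^ (d + 1) * cball)) * lam ^ 2 * R ^ (-((d : ℝ) - 2)) := by
  have h3 : R ^ (-((d : ℝ) - 2)) = R ^ 2 / R ^ d := by
    rw [show -((d : ℝ) - 2) = 2 - d by ring, Real.rpow_sub hR,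
      ← Real.rpow_natCast R d, ← Real.rpow_two]
  rw [h3, div_pow]
  have h2d : (2 : ℝ) ^ d ≠ 0 := by positivity
  have hRd : (0 : ℝ) < R ^ d := by positivity
  rcases eq_or_ne cball 0 with h | h
  · simp [h]
  field_simp
  ring

/-- the free energy of the flat density `u_R = λ χ_{B(0,R)}/(c'_d R^d)`
is bounded by `C₁ λ^m R^{-d(m-1)} - C₂ λ² R^{-(d-2)}` and is negative for large `R`. -/
theorem stmt_15 (d : ℕ) (hd : 3 ≤ d) (m lam : ℝ)
    (hm : 2 - 2 / (d : ℝ) < m) (hlam : 0 < lam)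
    (cball : ℝ)
    (hcball : cball = (volume (Metric.ball (0 : EuclideanSpace ℝ (Fin d)) 1)).toReal)
    (W : EuclideanSpace ℝ (Fin d) → ℝ)
    (hW_nonneg : ∀ x, 0 ≤ W x)
    (hW : ∃ cw > (0 : ℝ), ∃ R₀ : ℝ, ∀ R ≥ R₀,
      cw * R ^ 2 ≤ ∫ x in Metric.ball (0 : EuclideanSpace ℝ (Fin d)) (R / 2), W x)
    (u : ℝ → EuclideanSpace ℝ (Fin d) → ℝ)
    (hu : ∀ R > (0 : ℝ), ∀ x, u R x =
      lam * Set.indicator (Metric.ball (0 : EuclideanSpace ℝ (Fin d)) R)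
        (fun _ => (1 : ℝ)) x / (cball * R ^ d))
    (En : ℝ → ℝ)
    (hEn : ∀ R, En R = (∫ x, (1 / (m - 1)) * u R x ^ m)
      - (1 / 2) * ∫ x, u R x * ((u R ⋆ W) x)) :
    (∃ C₁ > (0 : ℝ), ∃ C₂ > (0 : ℝ), ∃ R₁ : ℝ, ∀ R ≥ R₁,
      En R ≤ C₁ * lam ^ m * R ^ (-((d : ℝ) * (m - 1)))
        - C₂ * lam ^ 2 * R ^ (-((d : ℝ) - 2))) ∧
    (∃ R₂ : ℝ, ∀ R ≥ R₂, En R < 0) := by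
  haveI : Nonempty (Fin d) := ⟨⟨0, by omega⟩⟩
  obtain ⟨cw, hcw, R₀, hWlb⟩ := hW
  -- basic positivity facts
  have hd3 : (3 : ℝ) ≤ (d : ℝ) := by exact_mod_cast hd
  have hd0 : (0 : ℝ) < d := by linarith
  have hm1 : (1 : ℝ) < m := by
    have h1 : 2 / (d : ℝ) ≤ 2 / 3 := by
      apply div_le_div_of_nonneg_left (by norm_num) (by norm_num) hd3
    linarith
  have hm0 : m ≠ 0 := by linarith
  have hcb : 0 < cball := by
    rw [hcball]
    apply ENNReal.toReal_pos
    · exact (Metric.measure_ball_pos volume _ one_pos).ne'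
    · exact (measure_ball_lt_top).ne
  -- volume of balls
  have vball : ∀ r : ℝ, 0 ≤ r →
      (volume (Metric.ball (0 : EuclideanSpace ℝ (Fin d)) r)).toReal = cball * r ^ d := by
    intro r hr
    rw [Measure.addHaar_ball _ _ hr, finrank_euclideanSpace_fin, ENNReal.toReal_mul,
      ENNReal.toReal_ofReal (by positivity), hcball]
    ring
  -- W is integrable on every ball
  have hWint : ∀ S : ℝ, IntegrableOn W (Metric.ball (0 : EuclideanSpace ℝ (Fin d)) S) volume := by
    intro S
    set Rw : ℝ := max (max R₀ 1) (2 * S) with hRw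
    have hRw1 : (1 : ℝ) ≤ Rw := le_trans (le_max_right R₀ 1) (le_max_left _ _)
    have h1 : cw * Rw ^ 2 ≤ ∫ x in Metric.ball (0 : EuclideanSpace ℝ (Fin d)) (Rw / 2), W x :=
      hWlb Rw (le_trans (le_max_left R₀ 1) (le_max_left _ _))
    have hpos : 0 < cw * Rw ^ 2 := by positivity
    have hint : IntegrableOn W (Metric.ball (0 : EuclideanSpace ℝ (Fin d)) (Rw / 2)) volume := by
      by_contra h
      rw [integral_undef h] at h1
      linarith
    exact hint.mono_set (Metric.ball_subset_ball (by
      have : 2 * S ≤ Rw := le_max_right _ _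
      linarith))
  have hWm : AEStronglyMeasurable W (volume : Measure (EuclideanSpace ℝ (Fin d))) := by
    have h := fun n : ℕ => (hWint n).aestronglyMeasurable
    have := aestronglyMeasurable_iUnion_iff.mpr h
    rwa [Metric.iUnion_ball_nat (0 : EuclideanSpace ℝ (Fin d)), Measure.restrict_univ] at this
  -- main estimate for a fixed R ≥ max R₀ 1
  set C₁ : ℝ := (1 / (m - 1)) * cball ^ ((1 : ℝ) - m) with hC₁
  set C₂ : ℝ := cw / (2 ^ (d + 1) * cball) with hC₂
  have hC₁pos : 0 < C₁ :=
    mul_pos (one_div_pos.mpr (by linarith)) (rpow_pos_of_pos hcb ((1 : ℝ) - m))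
  have hC₂pos : 0 < C₂ := by rw [hC₂]; positivity
  have main : ∀ R ≥ max R₀ 1,
      En R ≤ C₁ * lam ^ m * R ^ (-((d : ℝ) * (m - 1)))
        - C₂ * lam ^ 2 * R ^ (-((d : ℝ) - 2)) := by
    intro R hRge
    have hR1 : (1 : ℝ) ≤ R := le_trans (le_max_right _ _) hRge
    have hR : (0 : ℝ) < R := lt_of_lt_of_le one_pos hR1
    set a : ℝ := lam / (cball * R ^ d) with ha_def
    have ha : 0 < a := by positivity
    have hu' : ∀ x, u R x = Set.indicator (Metric.ball (0 : EuclideanSpace ℝ (Fin d)) R) (fun _ => a) x := by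
      intro x
      rw [hu R hR x]
      by_cases hx : x ∈ Metric.ball (0 : EuclideanSpace ℝ (Fin d)) R
      · simp [Set.indicator_of_mem hx, ha_def]
      · simp [Set.indicator_of_notMem hx]
    have hu_nonneg : ∀ x, 0 ≤ u R x := by
      intro x; rw [hu' x]
      exact Set.indicator_nonneg (fun _ _ => ha.le) x
    have hu_le : ∀ x, u R x ≤ a := by
      intro x; rw [hu' x]
      exact Set.indicator_le_self' (fun _ _ => ha.le) x
    -- first term
    have hT1 : (∫ x, (1 / (m - 1)) * u R x ^ m)
        = (1 / (m - 1)) * a ^ m * (cball * R ^ d) := by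
      have heq : (fun x => (1 / (m - 1)) * u R x ^ m)
          = Set.indicator (Metric.ball (0 : EuclideanSpace ℝ (Fin d)) R) (fun _ => (1 / (m - 1)) * a ^ m) := by
        funext x
        by_cases hx : x ∈ Metric.ball (0 : EuclideanSpace ℝ (Fin d)) R
        · simp [hu' x, Set.indicator_of_mem hx]
        · simp [hu' x, Set.indicator_of_notMem hx, Real.zero_rpow hm0]
      rw [heq, integral_indicator_const _ measurableSet_ball, smul_eq_mul, measureReal_def,
        vball R hR.le]
      ring
    -- convolution integrand is integrable at every point
    have hconv_int : ∀ x : EuclideanSpace ℝ (Fin d), Integrable (fun t => u R t * W (x - t)) volume := by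
      intro x
      have heq : (fun t => u R t * W (x - t))
          = Set.indicator (Metric.ball (0 : EuclideanSpace ℝ (Fin d)) R) (fun t => a * W (x - t)) := by
        funext t
        by_cases ht : t ∈ Metric.ball (0 : EuclideanSpace ℝ (Fin d)) R
        · simp [hu' t, Set.indicator_of_mem ht]
        · simp [hu' t, Set.indicator_of_notMem ht]
      rw [heq, integrable_indicator_iff measurableSet_ball]
      apply Integrable.const_mul
      -- t ↦ W (x - t) is integrable on ball 0 R
      have hg : Integrable (fun t : EuclideanSpace ℝ (Fin d) =>
          (Set.indicator (Metric.ball (0 : EuclideanSpace ℝ (Fin d)) (‖x‖ + R)) W) (x - t)) volume :=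
        ((integrable_indicator_iff measurableSet_ball).mpr
          (hWint (‖x‖ + R))).comp_sub_left x
      apply (hg.integrableOn).congr_fun _ measurableSet_ball
      intro t ht
      have : x - t ∈ Metric.ball (0 : EuclideanSpace ℝ (Fin d)) (‖x‖ + R) := by
        rw [mem_ball_zero_iff]
        calc ‖x - t‖ ≤ ‖x‖ + ‖t‖ := norm_sub_le x t
          _ < ‖x‖ + R := by
            have := mem_ball_zero_iff.mp ht; linarith
      simp [Set.indicator_of_mem this]
    have hconv_eq : ∀ x : EuclideanSpace ℝ (Fin d), (u R ⋆ W) x = ∫ t, u R t * W (x - t) := by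
      intro x
      rw [convolution_def]
      simp [ContinuousLinearMap.lsmul_apply, smul_eq_mul]
    have hconv_nonneg : ∀ x : EuclideanSpace ℝ (Fin d), 0 ≤ (u R ⋆ W) x := by
      intro x
      rw [hconv_eq x]
      exact integral_nonneg fun t => mul_nonneg (hu_nonneg t) (hW_nonneg _)
    -- lower bound for the convolution on the half ball
    have hlow : ∀ x ∈ Metric.ball (0 : EuclideanSpace ℝ (Fin d)) (R / 2),
        a * (cw * R ^ 2) ≤ (u R ⋆ W) x := by
      intro x hx
      rw [hconv_eq x]
      have hxball := mem_ball_zero_iff.mp hx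
      set g : EuclideanSpace ℝ (Fin d) → ℝ := Set.indicator (Metric.ball (0 : EuclideanSpace ℝ (Fin d)) (R / 2)) W with hg_def
      have hg_int : Integrable g volume :=
        (integrable_indicator_iff measurableSet_ball).mpr (hWint (R / 2))
      have hg_comp : Integrable (fun t : EuclideanSpace ℝ (Fin d) => a * g (x - t)) volume :=
        (hg_int.comp_sub_left x).const_mul a
      have hstep : ∫ t, a * g (x - t) ≤ ∫ t, u R t * W (x - t) := by
        apply integral_mono hg_comp (hconv_int x)
        intro t
        show a * g (x - t) ≤ u R t * W (x - t)
        by_cases ht : x - t ∈ Metric.ball (0 : EuclideanSpace ℝ (Fin d)) (R / 2)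
        · have htR : t ∈ Metric.ball (0 : EuclideanSpace ℝ (Fin d)) R := by
            rw [mem_ball_zero_iff]
            have h1 := mem_ball_zero_iff.mp ht
            calc ‖t‖ = ‖x - (x - t)‖ := by rw [sub_sub_cancel]
              _ ≤ ‖x‖ + ‖x - t‖ := norm_sub_le _ _
              _ < R / 2 + R / 2 := by linarith
              _ = R := by ring
          have : u R t = a := by rw [hu' t]; simp [Set.indicator_of_mem htR]
          rw [this, hg_def, Set.indicator_of_mem ht]
        · rw [hg_def, Set.indicator_of_notMem ht, mul_zero]
          exact mul_nonneg (hu_nonneg t) (hW_nonneg _)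
      have hval : ∫ t, a * g (x - t) = a * ∫ y in Metric.ball (0 : EuclideanSpace ℝ (Fin d)) (R / 2), W y := by
        rw [integral_const_mul]
        congr 1
        rw [integral_sub_left_eq_self g volume x, hg_def,
          integral_indicator measurableSet_ball]
      have hWR : cw * R ^ 2 ≤ ∫ y in Metric.ball (0 : EuclideanSpace ℝ (Fin d)) (R / 2), W y :=
        hWlb R (le_trans (le_max_left _ _) hRge)
      calc a * (cw * R ^ 2) ≤ a * ∫ y in Metric.ball (0 : EuclideanSpace ℝ (Fin d)) (R / 2), W y :=
            mul_le_mul_of_nonneg_left hWR ha.le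
        _ = ∫ t, a * g (x - t) := hval.symm
        _ ≤ _ := hstep
    -- the energy integrand F is integrable
    have hu_eq : u R = Set.indicator (Metric.ball (0 : EuclideanSpace ℝ (Fin d)) R) (fun _ => a) := funext hu'
    have hu_int : Integrable (u R) volume := by
      rw [hu_eq, integrable_indicator_iff measurableSet_ball]
      exact integrableOn_const measure_ball_lt_top.ne
    have hu_meas : AEStronglyMeasurable (u R) (volume : Measure (EuclideanSpace ℝ (Fin d))) :=
      hu_int.aestronglyMeasurable
    set W' : EuclideanSpace ℝ (Fin d) → ℝ := Set.indicator (Metric.ball (0 : EuclideanSpace ℝ (Fin d)) (2 * R)) W with hW'_def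
    have hW'_int : Integrable W' volume :=
      (integrable_indicator_iff measurableSet_ball).mpr (hWint (2 * R))
    have hFeq : (fun x => u R x * (u R ⋆ W) x) = fun x => u R x * (u R ⋆ W') x := by
      funext x
      by_cases hx : x ∈ Metric.ball (0 : EuclideanSpace ℝ (Fin d)) R
      · congr 1
        rw [hconv_eq x, convolution_def]
        simp only [ContinuousLinearMap.lsmul_apply, smul_eq_mul]
        congr 1
        funext t
        by_cases ht : t ∈ Metric.ball (0 : EuclideanSpace ℝ (Fin d)) R
        · have hmem : x - t ∈ Metric.ball (0 : EuclideanSpace ℝ (Fin d)) (2 * R) := by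
            rw [mem_ball_zero_iff]
            have h1 := mem_ball_zero_iff.mp hx
            have h2 := mem_ball_zero_iff.mp ht
            calc ‖x - t‖ ≤ ‖x‖ + ‖t‖ := norm_sub_le _ _
              _ < 2 * R := by linarith
          rw [hW'_def, Set.indicator_of_mem hmem]
        · have : u R t = 0 := by rw [hu' t]; simp [Set.indicator_of_notMem ht]
          rw [this, zero_mul, zero_mul]
      · have : u R x = 0 := by rw [hu' x]; simp [Set.indicator_of_notMem hx]
        rw [this, zero_mul, zero_mul]
    have hF_int : Integrable (fun x => u R x * (u R ⋆ W) x) volume := by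
      rw [hFeq]
      apply Integrable.bdd_mul (c := a) (hu_int.integrable_convolution _ hW'_int) hu_meas
      exact Filter.Eventually.of_forall fun x => by
        rw [Real.norm_eq_abs, abs_of_nonneg (hu_nonneg x)]; exact hu_le x
    -- lower bound for the interaction integral
    have hF_low : a * (a * (cw * R ^ 2)) * (cball * (R / 2) ^ d)
        ≤ ∫ x, u R x * (u R ⋆ W) x := by
      have hlow_int : Integrable (Set.indicator (Metric.ball (0 : EuclideanSpace ℝ (Fin d)) (R / 2))
          (fun _ => a * (a * (cw * R ^ 2)))) volume := by
        rw [integrable_indicator_iff measurableSet_ball]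
        exact integrableOn_const measure_ball_lt_top.ne
      have hmono : ∀ x, Set.indicator (Metric.ball (0 : EuclideanSpace ℝ (Fin d)) (R / 2))
          (fun _ => a * (a * (cw * R ^ 2))) x ≤ u R x * (u R ⋆ W) x := by
        intro x
        by_cases hx : x ∈ Metric.ball (0 : EuclideanSpace ℝ (Fin d)) (R / 2)
        · rw [Set.indicator_of_mem hx]
          have hxR : x ∈ Metric.ball (0 : EuclideanSpace ℝ (Fin d)) R := by
            rw [mem_ball_zero_iff]
            have := mem_ball_zero_iff.mp hx
            linarith
          have hux : u R x = a := by rw [hu' x]; simp [Set.indicator_of_mem hxR]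
          rw [hux]
          exact mul_le_mul_of_nonneg_left (hlow x hx) ha.le
        · rw [Set.indicator_of_notMem hx]
          exact mul_nonneg (hu_nonneg x) (hconv_nonneg x)
      have := integral_mono hlow_int hF_int hmono
      rwa [integral_indicator_const _ measurableSet_ball, smul_eq_mul, measureReal_def,
        vball (R / 2) (by linarith), mul_comm (cball * (R / 2) ^ d)] at this
    -- algebraic identities
    have hRd : (0 : ℝ) < R ^ d := by positivity
    have hid1 : (1 / (m - 1)) * a ^ m * (cball * R ^ d)
        = C₁ * lam ^ m * R ^ (-((d : ℝ) * (m - 1))) := by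
      rw [ha_def, hC₁]; exact stmt15_aux1 d m lam cball R hlam hcb hR
    have hid2 : (1 / 2) * (a * (a * (cw * R ^ 2)) * (cball * (R / 2) ^ d))
        = C₂ * lam ^ 2 * R ^ (-((d : ℝ) - 2)) := by
      rw [ha_def, hC₂]; exact stmt15_aux2 d cw lam cball R hR
    -- assemble
    rw [hEn R, hT1]
    have : (1 / 2) * (a * (a * (cw * R ^ 2)) * (cball * (R / 2) ^ d))
        ≤ (1 / 2) * ∫ x, u R x * (u R ⋆ W) x := by linarith
    linarith [hid1, hid2, this]
  constructor
  · exact ⟨C₁, hC₁pos, C₂, hC₂pos, max R₀ 1, main⟩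
  · -- negativity for large R
    have hε : 0 < (d : ℝ) * (m - 1) - ((d : ℝ) - 2) := by
      have h2 : (d : ℝ) * (2 / (d : ℝ)) = 2 := by field_simp
      nlinarith [mul_lt_mul_of_pos_left hm hd0]
    set ε : ℝ := (d : ℝ) * (m - 1) - ((d : ℝ) - 2) with hεdef
    set K : ℝ := C₁ * lam ^ m / (C₂ * lam ^ 2) with hK
    have hKpos : 0 < K := by
      have := rpow_pos_of_pos hlam m
      rw [hK]; positivity
    set R₂ : ℝ := max (max R₀ 1) ((K + 1) ^ (1 / ε)) with hR₂
    refine ⟨R₂, fun R hRge => ?_⟩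
    have hRge1 : R ≥ max R₀ 1 := le_trans (le_max_left _ _) hRge
    have hR1 : (1 : ℝ) ≤ R := le_trans (le_max_right R₀ 1) hRge1
    have hR : (0 : ℝ) < R := lt_of_lt_of_le one_pos hR1
    have hbound := main R hRge1
    have hKbig : K < R ^ ε := by
      have h1 : (K + 1) ^ (1 / ε) ≤ R := le_trans (le_max_right _ _) hRge
      have h2 : ((K + 1) ^ (1 / ε)) ^ ε ≤ R ^ ε :=
        Real.rpow_le_rpow (rpow_pos_of_pos (by linarith) _).le h1 hε.le
      rw [← Real.rpow_mul (by linarith : (0:ℝ) ≤ K + 1), one_div_mul_cancel hε.ne',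
        Real.rpow_one] at h2
      linarith
    -- conclude C₁ lam^m R^{-α} < C₂ lam² R^{-β}
    have hlam2 : (0 : ℝ) < C₂ * lam ^ 2 := by positivity
    have hstep : C₁ * lam ^ m < C₂ * lam ^ 2 * R ^ ε := by
      have := (div_lt_iff₀ hlam2).mp (by rw [← hK] at *; exact hKbig)
      linarith
    have hmul : C₁ * lam ^ m * R ^ (-((d : ℝ) * (m - 1)))
        < C₂ * lam ^ 2 * R ^ (-((d : ℝ) - 2)) := by
      have hRα : (0 : ℝ) < R ^ (-((d : ℝ) * (m - 1))) := rpow_pos_of_pos hR _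
      have h := mul_lt_mul_of_pos_right hstep hRα
      have hexp : R ^ ε * R ^ (-((d : ℝ) * (m - 1))) = R ^ (-((d : ℝ) - 2)) := by
        rw [← Real.rpow_add hR]
        congr 1
        rw [hεdef]; ring
      calc C₁ * lam ^ m * R ^ (-((d : ℝ) * (m - 1)))
          < C₂ * lam ^ 2 * R ^ ε * R ^ (-((d : ℝ) * (m - 1))) := h
        _ = C₂ * lam ^ 2 * R ^ (-((d : ℝ) - 2)) := by rw [mul_assoc, hexp]
    linarith
end
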